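/- (AMDCT VIII discrete orthogonality) Let N, n ≥ 1 and let k, k' ∈ D_N^−, i.e., integer vectors with N−1 ≥ k_1 > … > k_n ≥ 0 and N−1 ≥ k'_1 > … > k'_n ≥ 0. Then Σ_{r ∈ D_N^−} cos⁻_{k+ρ}(2(r_1+1/2)/(2N+1), …, 2(r_n+1/2)/(2N+1)) · cos⁻_{k'+ρ}(2(r_1+1/2)/(2N+1), …, 2(r_n+1/2)/(2N+1)) = ((2N+1)/4)^n · δ_{k,k'}, where ρ = (1/2,…,1/2). -/

import Mathlib

open Real Finset

/-- The antisymmetric multivariate cosine function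
`cos⁻_λ(x) = Σ_{σ ∈ S_n} sgn(σ) ∏_{i=1}^n cos(π λ_{σ(i)} x_i)`. -/
noncomputable def cosMinus (n : ℕ) (lam x : Fin n → ℝ) : ℝ :=
  ∑ σ : Equiv.Perm (Fin n),
    ((Equiv.Perm.sign σ : ℤ) : ℝ) * ∏ i : Fin n, Real.cos (Real.pi * lam (σ i) * x i)

lemma sum_cos_odd (θ : ℝ) (N : ℕ) :
    (∑ r ∈ Finset.range N, Real.cos ((2 * r + 1) * θ)) * (2 * Real.sin θ)
      = Real.sin (2 * N * θ) := by
  induction N with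
  | zero => simp
  | succ m ih =>
    rw [Finset.sum_range_succ, add_mul, ih]
    have h := Real.sin_sub_sin (2 * (m + 1) * θ) (2 * m * θ)
    have h1 : (2 * ((m:ℝ) + 1) * θ - 2 * m * θ) / 2 = θ := by ring
    have h2 : (2 * ((m:ℝ) + 1) * θ + 2 * m * θ) / 2 = (2 * m + 1) * θ := by ring
    rw [h1, h2] at h
    push_cast
    linarith [h]

lemma key_sum (m : ℤ) (N : ℕ) (hs : Real.sin (Real.pi * m / (2 * N + 1)) ≠ 0) :
    ∑ r ∈ Finset.range N, Real.cos ((2 * r + 1) * (Real.pi * m / (2 * N + 1)))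
      = -Real.cos (Real.pi * m) / 2 := by
  set θ := Real.pi * m / (2 * N + 1) with hθ
  have hne : (2 * (N:ℝ) + 1) ≠ 0 := by positivity
  have h2N : 2 * (N:ℝ) * θ = m * Real.pi - θ := by
    rw [hθ]; field_simp; ring
  have h := sum_cos_odd θ N
  rw [h2N, Real.sin_int_mul_pi_sub] at h
  have hc : Real.cos (Real.pi * m) = (-1 : ℝ) ^ m := by
    have := Real.cos_int_mul_pi_sub 0 m
    simpa [mul_comm] using this
  have h2s : (2 : ℝ) * Real.sin θ ≠ 0 := mul_ne_zero two_ne_zero hs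
  apply mul_right_cancel₀ h2s
  rw [h, hc]; ring

lemma cos_pi_int (m : ℤ) : Real.cos (Real.pi * m) = (-1 : ℝ) ^ m := by
  have := Real.cos_int_mul_pi_sub 0 m
  simpa [mul_comm] using this

lemma sin_ne_zero_of_small (N : ℕ) (m : ℤ) (hm0 : m ≠ 0) (hm : m.natAbs < 2 * N + 1) :
    Real.sin (Real.pi * m / (2 * N + 1)) ≠ 0 := by
  intro h
  rw [Real.sin_eq_zero_iff] at h
  obtain ⟨j, hj⟩ := h
  have hne : (2 * (N:ℝ) + 1) ≠ 0 := by positivity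
  have hπ := Real.pi_ne_zero
  have hj' : (j : ℝ) * (2 * N + 1) = m := by
    field_simp at hj
    apply mul_left_cancel₀ hπ
    linear_combination π * hj
  have hjz : j * (2 * (N:ℤ) + 1) = m := by exact_mod_cast hj'
  have hjne : j ≠ 0 := by rintro rfl; simp at hjz; omega
  have h1 : (1 : ℤ) ≤ |j| := Int.one_le_abs hjne
  have : (2 * (N:ℤ) + 1) ≤ |m| := by
    rw [← hjz, abs_mul]
    have : |2 * (N:ℤ) + 1| = 2 * N + 1 := abs_of_pos (by omega)
    nlinarith [abs_nonneg j]
  rw [Int.abs_eq_natAbs] at this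
  omega

lemma oneD (N : ℕ) (hN : 1 ≤ N) (a b : ℕ) (ha : a < N) (hb : b < N) :
    ∑ t : Fin N,
      Real.cos (Real.pi * ((a : ℝ) + 1 / 2) * (2 * (((t : ℕ) : ℝ) + 1 / 2) / (2 * N + 1))) *
      Real.cos (Real.pi * ((b : ℝ) + 1 / 2) * (2 * (((t : ℕ) : ℝ) + 1 / 2) / (2 * N + 1)))
      = (2 * (N : ℝ) + 1) / 4 * (if a = b then 1 else 0) := by
  have hne : (2 * (N:ℝ) + 1) ≠ 0 := by positivity
  set θ₁ : ℝ := Real.pi * (((a : ℤ) - b : ℤ) : ℝ) / (2 * N + 1) with hθ₁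
  set θ₂ : ℝ := Real.pi * (((a : ℤ) + b + 1 : ℤ) : ℝ) / (2 * N + 1) with hθ₂
  have hpt : ∀ r : ℕ,
      Real.cos (Real.pi * ((a : ℝ) + 1 / 2) * (2 * ((r : ℝ) + 1 / 2) / (2 * N + 1))) *
      Real.cos (Real.pi * ((b : ℝ) + 1 / 2) * (2 * ((r : ℝ) + 1 / 2) / (2 * N + 1)))
      = (Real.cos ((2 * r + 1) * θ₁) + Real.cos ((2 * r + 1) * θ₂)) / 2 := by
    intro r
    have h1 : (2 * (r:ℝ) + 1) * θ₁ =
        Real.pi * ((a : ℝ) + 1 / 2) * (2 * ((r : ℝ) + 1 / 2) / (2 * N + 1)) -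
        Real.pi * ((b : ℝ) + 1 / 2) * (2 * ((r : ℝ) + 1 / 2) / (2 * N + 1)) := by
      rw [hθ₁]; push_cast; field_simp; ring
    have h2 : (2 * (r:ℝ) + 1) * θ₂ =
        Real.pi * ((a : ℝ) + 1 / 2) * (2 * ((r : ℝ) + 1 / 2) / (2 * N + 1)) +
        Real.pi * ((b : ℝ) + 1 / 2) * (2 * ((r : ℝ) + 1 / 2) / (2 * N + 1)) := by
      rw [hθ₂]; push_cast; field_simp; ring
    rw [h1, h2, Real.cos_sub, Real.cos_add]; ring
  rw [Fin.sum_univ_eq_sum_range (fun t =>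
      Real.cos (Real.pi * ((a : ℝ) + 1 / 2) * (2 * ((t : ℝ) + 1 / 2) / (2 * N + 1))) *
      Real.cos (Real.pi * ((b : ℝ) + 1 / 2) * (2 * ((t : ℝ) + 1 / 2) / (2 * N + 1))))]
  have hstep : ∑ r ∈ Finset.range N,
        Real.cos (Real.pi * ((a : ℝ) + 1 / 2) * (2 * ((r : ℝ) + 1 / 2) / (2 * N + 1))) *
        Real.cos (Real.pi * ((b : ℝ) + 1 / 2) * (2 * ((r : ℝ) + 1 / 2) / (2 * N + 1)))
      = ((∑ r ∈ Finset.range N, Real.cos ((2 * r + 1) * θ₁)) +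
         (∑ r ∈ Finset.range N, Real.cos ((2 * r + 1) * θ₂))) / 2 := by
    rw [← Finset.sum_add_distrib, Finset.sum_div]
    exact Finset.sum_congr rfl fun r _ => hpt r
  rw [hstep]
  have hs₂ : ∑ r ∈ Finset.range N, Real.cos ((2 * r + 1) * θ₂)
      = -((-1 : ℝ) ^ ((a : ℤ) + b + 1)) / 2 := by
    have hsin : Real.sin θ₂ ≠ 0 := by
      rw [hθ₂]
      apply sin_ne_zero_of_small N ((a : ℤ) + b + 1) (by omega)
      have : ((a : ℤ) + b + 1).natAbs = a + b + 1 := by omega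
      omega
    rw [hθ₂] at hsin ⊢
    rw [key_sum ((a : ℤ) + b + 1) N hsin, cos_pi_int]
  by_cases hab : a = b
  · subst hab
    have hθ₁0 : θ₁ = 0 := by rw [hθ₁]; simp
    have hodd : (-1 : ℝ) ^ ((a : ℤ) + a + 1) = -1 :=
      Odd.neg_one_zpow ⟨a, by ring⟩
    rw [hs₂, hodd]
    simp only [hθ₁0, mul_zero, Real.cos_zero, Finset.sum_const, Finset.card_range,
      nsmul_eq_mul, mul_one]
    norm_num
    ring
  · have hs₁ : ∑ r ∈ Finset.range N, Real.cos ((2 * r + 1) * θ₁)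
        = -((-1 : ℝ) ^ ((a : ℤ) - b)) / 2 := by
      have hsin : Real.sin θ₁ ≠ 0 := by
        rw [hθ₁]
        apply sin_ne_zero_of_small N ((a : ℤ) - b)
        · intro h; apply hab; omega
        · have : ((a : ℤ) - b).natAbs < N := by omega
          omega
      rw [hθ₁] at hsin ⊢
      rw [key_sum ((a : ℤ) - b) N hsin, cos_pi_int]
    have hflip : (-1 : ℝ) ^ ((a : ℤ) + b + 1) = -((-1 : ℝ) ^ ((a : ℤ) - b)) := by
      have h : (a : ℤ) + b + 1 = ((a : ℤ) - b) + (2 * b + 1) := by ring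
      rw [h, zpow_add₀ (by norm_num : (-1 : ℝ) ≠ 0)]
      have h2 : (-1 : ℝ) ^ (2 * (b : ℤ) + 1) = -1 := Odd.neg_one_zpow ⟨b, by ring⟩
      rw [h2]; ring
    rw [hs₁, hs₂, hflip, if_neg hab]
    ring

lemma cosMinus_eq_det (n : ℕ) (lam x : Fin n → ℝ) :
    cosMinus n lam x =
      Matrix.det (Matrix.of fun i j => Real.cos (Real.pi * lam i * x j)) := by
  rw [Matrix.det_apply']
  rfl

lemma cosMinus_eq_zero (n : ℕ) (lam x : Fin n → ℝ) (i j : Fin n) (hij : i ≠ j)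
    (hx : x i = x j) : cosMinus n lam x = 0 := by
  rw [cosMinus_eq_det]
  exact Matrix.det_zero_of_column_eq hij (fun k => by simp [hx])

lemma cosMinus_perm (n : ℕ) (lam x : Fin n → ℝ) (τ : Equiv.Perm (Fin n)) :
    cosMinus n lam (x ∘ τ) = ((Equiv.Perm.sign τ : ℤ) : ℝ) * cosMinus n lam x := by
  rw [cosMinus_eq_det, cosMinus_eq_det]
  have : (Matrix.of fun i j => Real.cos (Real.pi * lam i * (x ∘ τ) j)) =
      (Matrix.of fun i j => Real.cos (Real.pi * lam i * x j)).submatrix id τ := rfl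
  rw [this, Matrix.det_permute']

lemma sort_unique {n : ℕ} {α : Type*} [LinearOrder α] {f : Fin n → α}
    (hf : Function.Injective f) {σ : Equiv.Perm (Fin n)} (hσ : Monotone (f ∘ σ)) :
    σ = Tuple.sort f := by
  rw [Tuple.eq_sort_iff]
  refine ⟨hσ, fun i j hij he => ?_⟩
  exact absurd (σ.injective (hf he)) hij.ne

lemma perm_monotone_eq_one {n : ℕ} (τ : Equiv.Perm (Fin n)) (h : Monotone τ) : τ = 1 := by
  have := Tuple.unique_monotone (f := (id : Fin n → Fin n)) (σ := τ) (τ := 1)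
    (by simpa using h) (by simp [monotone_id])
  have h2 : ⇑τ = id := by simpa using this
  exact Equiv.coe_fn_injective (by simp [h2])

lemma sym_sum {n N : ℕ} (G : (Fin n → Fin N) → ℝ)
    (hzero : ∀ r, ¬ Function.Injective r → G r = 0)
    (hsym : ∀ (r : Fin n → Fin N) (τ : Equiv.Perm (Fin n)), G (r ∘ τ) = G r) :
    ∑ r : Fin n → Fin N, G r
      = (n.factorial : ℝ) * ∑ r ∈ Finset.univ.filter
          (fun r : Fin n → Fin N => ∀ i j : Fin n, i < j → (r j : ℕ) < (r i : ℕ)), G r := by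
  classical
  have hdec_inj : ∀ s : Fin n → Fin N, (∀ i j : Fin n, i < j → (s j : ℕ) < (s i : ℕ)) →
      Function.Injective s := by
    intro s hs
    have : StrictAnti s := fun i j hij => by
      have := hs i j hij
      exact (Fin.lt_iff_val_lt_val.mpr this)
    exact this.injective
  have step1 : ∑ r : Fin n → Fin N, G r
      = ∑ r ∈ Finset.univ.filter (fun r : Fin n → Fin N => Function.Injective r), G r := by
    rw [Finset.sum_filter_of_ne]
    intro r _ hG
    by_contra h
    exact hG (hzero r h)
  rw [step1]
  -- bijection (s, τ) ↦ s ∘ τ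
  have step2 : ∑ r ∈ Finset.univ.filter (fun r : Fin n → Fin N => Function.Injective r), G r
      = ∑ p ∈ (Finset.univ.filter
          (fun r : Fin n → Fin N => ∀ i j : Fin n, i < j → (r j : ℕ) < (r i : ℕ))) ×ˢ
          (Finset.univ : Finset (Equiv.Perm (Fin n))), G (p.1 ∘ p.2) := by
    refine Finset.sum_nbij'
      (i := fun r : Fin n → Fin N => ((fun i => r (Tuple.sort r (Fin.rev i)) : Fin n → Fin N),
        ((Tuple.sort r)⁻¹).trans (Fin.revPerm)))
      (j := fun p : (Fin n → Fin N) × Equiv.Perm (Fin n) => p.1 ∘ p.2) ?_ ?_ ?_ ?_ ?_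
    · -- maps injective r into Dec ×ˢ univ
      intro r hr
      rw [Finset.mem_filter] at hr
      have hrinj := hr.2
      rw [Finset.mem_product, Finset.mem_filter]
      refine ⟨⟨Finset.mem_univ _, ?_⟩, Finset.mem_univ _⟩
      intro i j hij
      have hmono : StrictMono (r ∘ Tuple.sort r) :=
        (Tuple.monotone_sort r).strictMono_of_injective
          (hrinj.comp (Tuple.sort r).injective)
      have : Fin.rev j < Fin.rev i := Fin.rev_lt_rev.mpr hij
      exact Fin.lt_iff_val_lt_val.mp (hmono this)
    · -- maps Dec ×ˢ univ into injective
      rintro ⟨s, τ⟩ hp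
      rw [Finset.mem_product, Finset.mem_filter] at hp
      rw [Finset.mem_filter]
      exact ⟨Finset.mem_univ _, (hdec_inj s hp.1.2).comp τ.injective⟩
    · -- j ∘ i = id on injective r
      intro r hr
      funext i
      simp [Fin.rev_rev]
    · -- i ∘ j = id on Dec ×ˢ univ
      rintro ⟨s, τ⟩ hp
      rw [Finset.mem_product, Finset.mem_filter] at hp
      have hs := hp.1.2
      have hsanti : StrictAnti s := fun i j hij => Fin.lt_iff_val_lt_val.mpr (hs i j hij)
      have hrinj : Function.Injective (s ∘ τ) := (hsanti.injective).comp τ.injective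
      have hsort : (Fin.revPerm.trans τ⁻¹) = Tuple.sort (s ∘ τ) := by
        apply sort_unique hrinj
        have key : ∀ i, ((s ∘ τ) ∘ (Fin.revPerm.trans τ⁻¹)) i = s (Fin.rev i) := by
          intro i; simp
        intro i j hij
        rw [key i, key j]
        rcases eq_or_lt_of_le hij with rfl | hlt
        · exact le_refl _
        · have h1 : Fin.rev j < Fin.rev i := Fin.rev_lt_rev.mpr hlt
          exact (hsanti h1).le
      have h1 : (fun i => (s ∘ τ) (Tuple.sort (s ∘ τ) (Fin.rev i))) = s := by
        funext i
        rw [← hsort]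
        simp [Fin.rev_rev]
      have h2 : ((Tuple.sort (s ∘ τ))⁻¹).trans Fin.revPerm = τ := by
        rw [← hsort]
        apply Equiv.ext
        intro i
        have hσ : (Fin.revPerm.trans τ⁻¹)⁻¹ i = Fin.rev (τ i) := by
          rw [Equiv.Perm.inv_def, Equiv.symm_apply_eq]
          simp [Fin.rev_rev]
        simp [Equiv.trans_apply, hσ, Fin.rev_rev]
      exact Prod.ext h1 h2
    · -- value agreement
      intro r hr
      exact congrArg G (by funext i; simp [Fin.rev_rev])
  rw [step2, Finset.sum_product]
  rw [Finset.mul_sum]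
  refine Finset.sum_congr rfl fun s hs => ?_
  rw [Finset.sum_congr rfl (fun τ _ => hsym s τ)]
  simp [Finset.card_univ, Fintype.card_perm, Fintype.card_fin, mul_comm]

lemma cond_iff {n : ℕ} (k k' : Fin n → ℕ)
    (hk : ∀ i j : Fin n, i < j → k j < k i) (hk' : ∀ i j : Fin n, i < j → k' j < k' i)
    (σ σ' : Equiv.Perm (Fin n)) :
    (∀ i, k (σ i) = k' (σ' i)) ↔ (k = k' ∧ σ = σ') := by
  constructor
  · intro h
    have hk'anti : StrictAnti k' := fun i j hij => hk' i j hij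
    have hkanti : StrictAnti k := fun i j hij => hk i j hij
    have hρ : ∀ j, k j = k' (σ' (σ⁻¹ j)) := fun j => by
      have := h (σ⁻¹ j); simpa using this
    have hmono : Monotone (σ⁻¹.trans σ') := by
      intro i j hij
      rcases eq_or_lt_of_le hij with rfl | hlt
      · exact le_refl _
      · have h1 : k j < k i := hkanti hlt
        rw [hρ i, hρ j] at h1
        have := (StrictAnti.lt_iff_gt hk'anti).mp h1
        simpa [Equiv.trans_apply] using this.le
    have hρ1 : σ⁻¹.trans σ' = 1 := perm_monotone_eq_one _ hmono
    have hσ : σ = σ' := by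
      apply Equiv.ext
      intro i
      have := congrArg (fun e : Equiv.Perm (Fin n) => e (σ i)) hρ1
      simpa using this.symm
    have hkk : k = k' := by
      funext j
      have := hρ j
      rw [← hσ] at this
      simpa using this
    exact ⟨hkk, hσ⟩
  · rintro ⟨rfl, rfl⟩ i
    rfl

lemma all_sum {n N : ℕ} (hN : 1 ≤ N) (k k' : Fin n → ℕ)
    (hk : ∀ i j : Fin n, i < j → k j < k i) (hk' : ∀ i j : Fin n, i < j → k' j < k' i)
    (hkb : ∀ i, k i < N) (hk'b : ∀ i, k' i < N) :
    ∑ r : Fin n → Fin N,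
      cosMinus n (fun i => (k i : ℝ) + 1 / 2)
          (fun i => 2 * (((r i : ℕ) : ℝ) + 1 / 2) / (2 * N + 1)) *
        cosMinus n (fun i => (k' i : ℝ) + 1 / 2)
          (fun i => 2 * (((r i : ℕ) : ℝ) + 1 / 2) / (2 * N + 1))
      = (n.factorial : ℝ) * ((2 * (N : ℝ) + 1) / 4) ^ n * (if k = k' then 1 else 0) := by
  classical
  have expand : ∀ r : Fin n → Fin N,
      cosMinus n (fun i => (k i : ℝ) + 1 / 2)
          (fun i => 2 * (((r i : ℕ) : ℝ) + 1 / 2) / (2 * N + 1)) *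
        cosMinus n (fun i => (k' i : ℝ) + 1 / 2)
          (fun i => 2 * (((r i : ℕ) : ℝ) + 1 / 2) / (2 * N + 1))
      = ∑ σ : Equiv.Perm (Fin n), ∑ σ' : Equiv.Perm (Fin n),
          (((Equiv.Perm.sign σ : ℤ) : ℝ) * ((Equiv.Perm.sign σ' : ℤ) : ℝ)) *
          ∏ i : Fin n,
            (Real.cos (Real.pi * ((k (σ i) : ℝ) + 1 / 2) *
                (2 * (((r i : ℕ) : ℝ) + 1 / 2) / (2 * N + 1))) *
             Real.cos (Real.pi * ((k' (σ' i) : ℝ) + 1 / 2) *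
                (2 * (((r i : ℕ) : ℝ) + 1 / 2) / (2 * N + 1)))) := by
    intro r
    rw [cosMinus, cosMinus, Finset.sum_mul_sum]
    refine Finset.sum_congr rfl fun σ _ => Finset.sum_congr rfl fun σ' _ => ?_
    rw [Finset.prod_mul_distrib]
    ring
  rw [Finset.sum_congr rfl (fun r _ => expand r)]
  rw [Finset.sum_comm]
  have swap2 : ∀ σ : Equiv.Perm (Fin n),
      (∑ r : Fin n → Fin N, ∑ σ' : Equiv.Perm (Fin n),
        (((Equiv.Perm.sign σ : ℤ) : ℝ) * ((Equiv.Perm.sign σ' : ℤ) : ℝ)) *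
          ∏ i : Fin n,
            (Real.cos (Real.pi * ((k (σ i) : ℝ) + 1 / 2) *
                (2 * (((r i : ℕ) : ℝ) + 1 / 2) / (2 * N + 1))) *
             Real.cos (Real.pi * ((k' (σ' i) : ℝ) + 1 / 2) *
                (2 * (((r i : ℕ) : ℝ) + 1 / 2) / (2 * N + 1)))))
      = ∑ σ' : Equiv.Perm (Fin n),
          (((Equiv.Perm.sign σ : ℤ) : ℝ) * ((Equiv.Perm.sign σ' : ℤ) : ℝ)) *
          (((2 * (N : ℝ) + 1) / 4) ^ n *
            (if ∀ i : Fin n, k (σ i) = k' (σ' i) then 1 else 0)) := by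
    intro σ
    rw [Finset.sum_comm]
    refine Finset.sum_congr rfl fun σ' _ => ?_
    rw [← Finset.mul_sum]
    congr 1
    have fubini : ∑ r : Fin n → Fin N,
        ∏ i : Fin n,
            (Real.cos (Real.pi * ((k (σ i) : ℝ) + 1 / 2) *
                (2 * (((r i : ℕ) : ℝ) + 1 / 2) / (2 * N + 1))) *
             Real.cos (Real.pi * ((k' (σ' i) : ℝ) + 1 / 2) *
                (2 * (((r i : ℕ) : ℝ) + 1 / 2) / (2 * N + 1))))
        = ∏ i : Fin n, ∑ t : Fin N,
            (Real.cos (Real.pi * ((k (σ i) : ℝ) + 1 / 2) *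
                (2 * (((t : ℕ) : ℝ) + 1 / 2) / (2 * N + 1))) *
             Real.cos (Real.pi * ((k' (σ' i) : ℝ) + 1 / 2) *
                (2 * (((t : ℕ) : ℝ) + 1 / 2) / (2 * N + 1)))) := by
      rw [Finset.prod_univ_sum]
      rw [Fintype.piFinset_univ]
    rw [fubini]
    have honeD : ∀ i : Fin n, (∑ t : Fin N,
            (Real.cos (Real.pi * ((k (σ i) : ℝ) + 1 / 2) *
                (2 * (((t : ℕ) : ℝ) + 1 / 2) / (2 * N + 1))) *
             Real.cos (Real.pi * ((k' (σ' i) : ℝ) + 1 / 2) *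
                (2 * (((t : ℕ) : ℝ) + 1 / 2) / (2 * N + 1)))))
        = (2 * (N : ℝ) + 1) / 4 * (if k (σ i) = k' (σ' i) then 1 else 0) :=
      fun i => oneD N hN (k (σ i)) (k' (σ' i)) (hkb _) (hk'b _)
    rw [Finset.prod_congr rfl (fun i _ => honeD i)]
    rw [Finset.prod_mul_distrib, Finset.prod_const, Finset.prod_boole]
    simp [Finset.card_univ, Fintype.card_fin]
  rw [Finset.sum_congr rfl (fun σ _ => swap2 σ)]
  by_cases hkk : k = k'
  · subst hkk
    have hterm : ∀ σ σ' : Equiv.Perm (Fin n),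
        (((Equiv.Perm.sign σ : ℤ) : ℝ) * ((Equiv.Perm.sign σ' : ℤ) : ℝ)) *
          (((2 * (N : ℝ) + 1) / 4) ^ n *
            (if ∀ i : Fin n, k (σ i) = k (σ' i) then 1 else 0))
        = if σ = σ' then
            (((Equiv.Perm.sign σ : ℤ) : ℝ) * ((Equiv.Perm.sign σ' : ℤ) : ℝ)) *
              ((2 * (N : ℝ) + 1) / 4) ^ n
          else 0 := by
      intro σ σ'
      have : (∀ i : Fin n, k (σ i) = k (σ' i)) ↔ (σ = σ') := by
        rw [cond_iff k k hk hk σ σ']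
        simp
      simp only [this]
      by_cases h : σ = σ' <;> simp [h]
    rw [Finset.sum_congr rfl (fun σ _ => Finset.sum_congr rfl (fun σ' _ => hterm σ σ'))]
    have hinner : ∀ σ : Equiv.Perm (Fin n),
        (∑ σ' : Equiv.Perm (Fin n), if σ = σ' then
            (((Equiv.Perm.sign σ : ℤ) : ℝ) * ((Equiv.Perm.sign σ' : ℤ) : ℝ)) *
              ((2 * (N : ℝ) + 1) / 4) ^ n
          else 0)
        = ((2 * (N : ℝ) + 1) / 4) ^ n := by
      intro σ
      rw [Finset.sum_ite_eq]
      simp [← Int.cast_mul, ← Units.val_mul]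
    rw [Finset.sum_congr rfl (fun σ _ => hinner σ)]
    simp [Finset.card_univ, Fintype.card_perm, Fintype.card_fin, mul_comm]
  · have hterm : ∀ σ σ' : Equiv.Perm (Fin n),
        (((Equiv.Perm.sign σ : ℤ) : ℝ) * ((Equiv.Perm.sign σ' : ℤ) : ℝ)) *
          (((2 * (N : ℝ) + 1) / 4) ^ n *
            (if ∀ i : Fin n, k (σ i) = k' (σ' i) then 1 else 0)) = 0 := by
      intro σ σ'
      have : ¬ (∀ i : Fin n, k (σ i) = k' (σ' i)) := by
        rw [cond_iff k k' hk hk' σ σ']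
        tauto
      simp [this]
    rw [Finset.sum_congr rfl (fun σ _ => Finset.sum_congr rfl (fun σ' _ => hterm σ σ'))]
    simp [hkk]

theorem AMDCT_VIII_orthogonality (n N : ℕ) (hn : 1 ≤ n) (hN : 1 ≤ N)
    (k k' : Fin n → ℕ)
    (hk : ∀ i j : Fin n, i < j → k j < k i) (hkb : ∀ i, k i ≤ N - 1)
    (hk' : ∀ i j : Fin n, i < j → k' j < k' i) (hk'b : ∀ i, k' i ≤ N - 1) :
    ∑ r ∈ Finset.univ.filter
        (fun r : Fin n → Fin N => ∀ i j : Fin n, i < j → (r j : ℕ) < (r i : ℕ)),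
      cosMinus n (fun i => (k i : ℝ) + 1 / 2)
          (fun i => 2 * (((r i : ℕ) : ℝ) + 1 / 2) / (2 * N + 1)) *
        cosMinus n (fun i => (k' i : ℝ) + 1 / 2)
          (fun i => 2 * (((r i : ℕ) : ℝ) + 1 / 2) / (2 * N + 1))
      = ((2 * (N : ℝ) + 1) / 4) ^ n * (if k = k' then (1 : ℝ) else 0) := by
  classical
  set G : (Fin n → Fin N) → ℝ := fun r =>
    cosMinus n (fun i => (k i : ℝ) + 1 / 2)
        (fun i => 2 * (((r i : ℕ) : ℝ) + 1 / 2) / (2 * N + 1)) *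
      cosMinus n (fun i => (k' i : ℝ) + 1 / 2)
        (fun i => 2 * (((r i : ℕ) : ℝ) + 1 / 2) / (2 * N + 1)) with hG
  have hzero : ∀ r : Fin n → Fin N, ¬ Function.Injective r → G r = 0 := by
    intro r hr
    rw [Function.not_injective_iff] at hr
    obtain ⟨a, b, hab, hne⟩ := hr
    have hx : (fun i => 2 * (((r i : ℕ) : ℝ) + 1 / 2) / (2 * N + 1)) a
        = (fun i => 2 * (((r i : ℕ) : ℝ) + 1 / 2) / (2 * N + 1)) b := by
      simp only [hab]
    rw [hG]
    simp only
    rw [cosMinus_eq_zero n _ _ a b hne hx, zero_mul]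
  have hsym : ∀ (r : Fin n → Fin N) (τ : Equiv.Perm (Fin n)), G (r ∘ τ) = G r := by
    intro r τ
    rw [hG]
    simp only
    have h1 : (fun i => 2 * (((( (r ∘ τ) i : ℕ)) : ℝ) + 1 / 2) / (2 * N + 1))
        = (fun i => 2 * (((r i : ℕ) : ℝ) + 1 / 2) / (2 * N + 1)) ∘ τ := rfl
    rw [h1, cosMinus_perm, cosMinus_perm]
    have h2 : ((Equiv.Perm.sign τ : ℤ) : ℝ) * ((Equiv.Perm.sign τ : ℤ) : ℝ) = 1 := by
      simp [← Int.cast_mul, ← Units.val_mul]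
    rw [mul_mul_mul_comm, h2, one_mul]
  have hall := all_sum (n := n) hN k k' hk hk'
    (fun i => by have := hkb i; omega) (fun i => by have := hk'b i; omega)
  have hsum := sym_sum G hzero hsym
  rw [hall] at hsum
  have hfac : (n.factorial : ℝ) ≠ 0 := by
    exact_mod_cast Nat.factorial_ne_zero n
  have hEq : (n.factorial : ℝ) * (∑ r ∈ Finset.univ.filter
        (fun r : Fin n → Fin N => ∀ i j : Fin n, i < j → (r j : ℕ) < (r i : ℕ)), G r)
      = (n.factorial : ℝ) * (((2 * (N : ℝ) + 1) / 4) ^ n * (if k = k' then (1 : ℝ) else 0)) := by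
    rw [← hsum, mul_assoc]
  exact mul_left_cancel₀ hfac hEq
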